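/- Let R be a commutative ring of characteristic p > 0 and n = mp. On HH^*(R[Z/nZ]) ≅ R[x,y,z]/(xⁿ−1, y²) (resp. R[x,y,z]/(xⁿ−1, y²−x^{n−2}z) when p=2 and m odd), the BV-operator Δ induced by the canonical symmetric form of the group ring satisfies Δ(z^k x^l) = 0 and Δ(z^k y x^l) = (l−1) z^k x^{l−1}. -/

import Mathlib

noncomputable section

open scoped Classical

/-- The group ring `A = R[σ]/(σⁿ−1) = R[ℤ/nℤ]`. -/
abbrev CycA (R : Type) [CommRing R] (n : ℕ) : Type := AddMonoidAlgebra R (ZMod n)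

/-- The generator `σ` of the group ring. -/
def sig (R : Type) [CommRing R] (n : ℕ) : CycA R n := AddMonoidAlgebra.single (1 : ZMod n) 1

variable (R : Type) [CommRing R] (n : ℕ)

/-- `⟨1, a⟩ = ε(a)`: the coefficient of the identity element, i.e. the canonical
symmetric (Frobenius) form of the group ring evaluated against 1. -/
def eps (a : CycA R n) : R := a.coeff 0

/-- The cyclic rotation with insertion used in the dual of the Connes B-operator:
for a degree-`m` tuple `i` (of exponents of σ), `rotIns c j i` is the `(m+1)`-tuple
`(a_{c+1}, …, a_m, σ^j, a_1, …, a_c)`. -/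
def rotIns {m : ℕ} (c : Fin (m + 1)) (j : Fin n) (i : Fin m → Fin n) :
    Fin (m + 1) → Fin n :=
  fun t =>
    if h : t.val + c.val < m then i ⟨t.val + c.val, h⟩
    else if h2 : t.val + c.val = m then j
    else i ⟨t.val + c.val - (m + 1), by have := t.isLt; have := c.isLt; omega⟩

/-- The BV-operator `Δ` on (normalized bar) Hochschild cochains of the symmetric
algebra `A = R[ℤ/nℤ]`, i.e. the dual of the Connes B-operator with respect to the
canonical symmetric form:
`Δ(f)(a_1,…,a_m) = Σ_j Σ_{c} (−1)^{cm} ⟨1, f(a_c,…,a_m,σ^j,a_1,…,a_{c−1})⟩ (σ^j)^∨`,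
where `(σ^j)^∨ = σ^{n−j}` is the dual basis for the canonical form. -/
def deltaBar (m : ℕ) (f : (Fin (m + 1) → Fin n) → CycA R n) :
    (Fin m → Fin n) → CycA R n :=
  fun i => ∑ j : Fin n, ∑ c : Fin (m + 1),
    ((-1 : ℤ) ^ ((c.val + 1) * m)) •
      (eps R n (f (rotIns n c j i)) • (sig R n) ^ (n - j.val))

/-- The even comparison cochain `φ̄*_{2r}(a)`. -/
def phiEven (r : ℕ) (a : CycA R n) : (Fin (2 * r) → Fin n) → CycA R n :=
  fun i =>
    if ∀ k : Fin r, n ≤ (i ⟨2 * k.val, by have := k.isLt; omega⟩).val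
        + (i ⟨2 * k.val + 1, by have := k.isLt; omega⟩).val then
      ((-1 : ℤ) ^ r) • (a * (sig R n) ^ ((∑ t, (i t).val) - r * n))
    else 0

/-- The odd comparison cochain `φ̄*_{2r+1}(a)`. -/
def phiOdd (r : ℕ) (a : CycA R n) : (Fin (2 * r + 1) → Fin n) → CycA R n :=
  fun i =>
    if ∀ k : Fin r, n ≤ (i ⟨2 * k.val + 1, by have := k.isLt; omega⟩).val
        + (i ⟨2 * k.val + 2, by have := k.isLt; omega⟩).val then
      ((-1 : ℤ) ^ (r + 1) * (i ⟨0, by omega⟩).val) •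
        (a * (sig R n) ^ ((∑ t, (i t).val) - r * n - 1))
    else 0

/-- `ψ̄*_{2r}`: evaluation of a degree-`2r` cochain back to the 2-periodic model. -/
def psiEven (hn : 0 < n) (r : ℕ) (f : (Fin (2 * r) → Fin n) → CycA R n) : CycA R n :=
  ∑ i : Fin r → Fin n,
    ((-1 : ℤ) ^ r) •
      (f (fun t => if h : t.val % 2 = 0 then i ⟨t.val / 2, by have := t.isLt; omega⟩
          else ⟨1 % n, Nat.mod_lt _ hn⟩)
        * (sig R n) ^ (r * (n - 1) - ∑ k, (i k).val))

/-- `ψ̄*_{2r+1}`: evaluation of a degree-`2r+1` cochain back to the 2-periodic model. -/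
def psiOdd (hn : 0 < n) (r : ℕ) (f : (Fin (2 * r + 1) → Fin n) → CycA R n) : CycA R n :=
  ∑ i : Fin r → Fin n,
    ((-1 : ℤ) ^ (r + 1)) •
      (f (fun t => if h : t.val % 2 = 1 then i ⟨t.val / 2, by have := t.isLt; omega⟩
          else ⟨1 % n, Nat.mod_lt _ hn⟩)
        * (sig R n) ^ (r * (n - 1) - ∑ k, (i k).val))


/-! ### Auxiliary machinery -/

namespace BVAux

open AddMonoidAlgebra Finset

variable {R : Type} [CommRing R] {n : ℕ}

lemma sig_pow (R : Type) [CommRing R] (n a : ℕ) :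
    (sig R n) ^ a = AddMonoidAlgebra.single ((a : ZMod n)) 1 := by
  rw [sig, AddMonoidAlgebra.single_pow, one_pow, nsmul_eq_mul, mul_one]

lemma sig_pow_mul_sig_pow (R : Type) [CommRing R] (n a b : ℕ) :
    (sig R n) ^ a * (sig R n) ^ b = (sig R n) ^ (a + b) := by
  rw [pow_add]

lemma eps_single (g : ZMod n) (r : R) :
    eps R n (AddMonoidAlgebra.single g r) = if g = 0 then r else 0 := by
  rw [eps, AddMonoidAlgebra.coeff_single, Finsupp.single_apply]

lemma eps_sig_pow (a : ℕ) :
    eps R n ((sig R n) ^ a) = if ((a : ZMod n)) = 0 then (1 : R) else 0 := by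
  rw [sig_pow, eps_single]

lemma eps_zsmul (z : ℤ) (a : CycA R n) : eps R n (z • a) = z • eps R n a := by
  rw [eps, eps, AddMonoidAlgebra.coeff_smul]; rfl

lemma eps_zero : eps R n (0 : CycA R n) = 0 := by simp [eps]

/-- The insertion (without rotation): `(i_0, …, i_{m-1}, j)`. -/
def insFun {m : ℕ} (j : Fin n) (i : Fin m → Fin n) : Fin (m + 1) → Fin n :=
  fun s => if h : s.val < m then i ⟨s.val, h⟩ else j

lemma rotIns_eq {m : ℕ} (c : Fin (m + 1)) (j : Fin n) (i : Fin m → Fin n) :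
    rotIns n c j i = fun t => insFun j i (t + c) := by
  funext t
  have hc := c.isLt
  have ht := t.isLt
  have hval : ((t + c : Fin (m+1))).val = (t.val + c.val) % (m + 1) := by
    simp [Fin.add_def]
  simp only [rotIns, insFun]
  rcases lt_trichotomy (t.val + c.val) m with h | h | h
  · have hv : ((t + c : Fin (m+1))).val = t.val + c.val := by
      rw [hval, Nat.mod_eq_of_lt (by omega)]
    rw [dif_pos h, dif_pos (show ((t + c : Fin (m+1))).val < m by omega)]
    exact congrArg i (Fin.ext hv.symm)
  · have hv : ((t + c : Fin (m+1))).val = m := by rw [hval, h, Nat.mod_eq_of_lt (Nat.lt_succ_self m)]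
    rw [dif_neg (by omega), dif_pos h, dif_neg (by omega)]
  · have hge : m + 1 ≤ t.val + c.val := by omega
    have hv : ((t + c : Fin (m+1))).val = t.val + c.val - (m + 1) := by
      rw [hval, Nat.mod_eq_sub_mod hge, Nat.mod_eq_of_lt (by omega)]
    rw [dif_neg (by omega), dif_neg (by omega),
      dif_pos (show ((t + c : Fin (m+1))).val < m by omega)]
    exact congrArg i (Fin.ext hv.symm)

lemma insFun_castSucc {m : ℕ} (j : Fin n) (i : Fin m → Fin n) (s : Fin m) :
    insFun j i s.castSucc = i s := by
  have hlt : (s.castSucc : ℕ) < m := by simp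
  rw [insFun, dif_pos hlt]
  exact congrArg i (Fin.ext rfl)

lemma insFun_last {m : ℕ} (j : Fin n) (i : Fin m → Fin n) :
    insFun j i (Fin.last m) = j := by
  rw [insFun, dif_neg (by simp)]

lemma sum_insFun {m : ℕ} (j : Fin n) (i : Fin m → Fin n) :
    ∑ t : Fin (m+1), (insFun j i t).val = (∑ s : Fin m, (i s).val) + j.val := by
  rw [Fin.sum_univ_castSucc]
  simp [insFun_castSucc, insFun_last]

lemma sum_rotIns {m : ℕ} (c : Fin (m + 1)) (j : Fin n) (i : Fin m → Fin n) :
    ∑ t : Fin (m+1), (rotIns n c j i t).val = (∑ s : Fin m, (i s).val) + j.val := by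
  rw [rotIns_eq, ← sum_insFun j i]
  exact Fintype.sum_equiv (Equiv.addRight c) _ _ (fun t => rfl)


lemma two_mul_add_one_mod (x y : ℕ) (hy : 0 < y) : (2*x+1) % (2*y) = 2*(x % y) + 1 := by
  have h := Nat.div_add_mod x y
  conv_lhs => rw [show 2*x+1 = (2*y)*(x/y) + (2*(x % y)+1) by
    calc 2*x+1 = 2*(y*(x/y) + x % y)+1 := by rw [h]
      _ = (2*y)*(x/y) + (2*(x % y)+1) := by ring]
  rw [Nat.mul_add_mod]
  exact Nat.mod_eq_of_lt (by have := Nat.mod_lt x hy; omega)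

lemma two_mul_mod (x y : ℕ) : (2*x) % (2*y) = 2*(x % y) := Nat.mul_mod_mul_left 2 x y

lemma signsum (k : ℕ) : ∑ c : Fin (2*k+1+1), ((-1:ℤ)^((c.val+1)*(2*k+1))) = 0 := by
  have h1 : ∀ c : Fin (2*k+1+1), ((-1:ℤ)^((c.val+1)*(2*k+1))) = (-1)^(c.val+1) := by
    intro c
    rw [mul_comm, pow_mul, Odd.neg_one_pow ⟨k, by ring⟩]
  rw [Finset.sum_congr rfl (fun c _ => h1 c)]
  rw [Fin.sum_univ_eq_sum_range (fun c => ((-1:ℤ))^(c+1))]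
  have : ∀ c ∈ Finset.range (2*k+1+1), ((-1:ℤ))^(c+1) = (-1)^c * (-1) := by
    intro c _; rw [pow_succ]
  rw [Finset.sum_congr rfl this, ← Finset.sum_mul, neg_one_geom_sum,
    if_pos (by exact ⟨k+1, by ring⟩), zero_mul]

lemma insFun_val_lt {m : ℕ} (j : Fin n) (i : Fin m → Fin n) (x : Fin (m+1))
    (h : x.val < m) : insFun j i x = i ⟨x.val, h⟩ := dif_pos h

lemma insFun_val_ge {m : ℕ} (j : Fin n) (i : Fin m → Fin n) (x : Fin (m+1))
    (h : ¬ x.val < m) : insFun j i x = j := dif_neg h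

lemma deltaPhiEven_eq_zero (hn : 0 < n) (k l : ℕ) (i : Fin k → Fin n)
    (ib : Fin (2*k+1) → Fin n)
    (hibe : ∀ (v : ℕ) (h : v < 2*k+1), v % 2 = 0 → (ib ⟨v, h⟩).val = 1 % n)
    (hibo : ∀ (v : ℕ) (h : v < 2*k+1) (ho : v % 2 = 1), ib ⟨v, h⟩ = i ⟨v/2, by omega⟩) :
    deltaBar R n (2*k+1)
      (fun y => phiEven R n (k+1) ((sig R n)^l) (fun t => y (Fin.cast (by ring) t))) ib
      = 0 := by
  simp only [deltaBar]
  apply Finset.sum_eq_zero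
  intro j _
  have pf : 2*(k+1) = 2*k+1+1 := by ring
  -- the pair computation
  have pair : ∀ (c : Fin (2*k+1+1)) (t d : Fin (k+1))
      (h₁ : 2*t.val < 2*(k+1)) (h₂ : 2*t.val+1 < 2*(k+1)), d.val = c.val/2 →
      (rotIns n c j ib (Fin.cast pf ⟨2*t.val, h₁⟩)).val
        + (rotIns n c j ib (Fin.cast pf ⟨2*t.val+1, h₂⟩)).val
      = 1 % n + (insFun j i (t + d)).val := by
    intro c t d h₁ h₂ hd
    simp only [rotIns_eq]
    have hc := c.isLt
    have ht := t.isLt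
    have hv1 : (Fin.cast pf ⟨2*t.val, h₁⟩ + c).val = (2*t.val + c.val) % (2*(k+1)) := by
      simp [Fin.add_def]
    have hv2 : (Fin.cast pf ⟨2*t.val+1, h₂⟩ + c).val
        = (2*t.val+1 + c.val) % (2*(k+1)) := by
      simp [Fin.add_def]
    have hv3 : (t + d).val = (t.val + d.val) % (k+1) := by
      simp [Fin.add_def]
    generalize hQ1 : Fin.cast pf ⟨2*t.val, h₁⟩ + c = q1 at hv1 ⊢
    generalize hQ2 : Fin.cast pf ⟨2*t.val+1, h₂⟩ + c = q2 at hv2 ⊢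
    generalize hQ3 : t + d = q3 at hv3 ⊢
    have hq1 := q1.isLt
    have hq2 := q2.isLt
    have hq3 := q3.isLt
    rcases Nat.even_or_odd c.val with ⟨e, he⟩ | ⟨e, he⟩
    · -- c.val = 2*e
      have he2 : c.val = 2*e := by omega
      set u := (t.val + e) % (k+1) with hu
      have hul : u < k+1 := Nat.mod_lt _ (by omega)
      have h1 : q1.val = 2*u := by
        rw [hv1, he2, show 2*t.val + 2*e = 2*(t.val+e) by ring, two_mul_mod]
      have h2 : q2.val = 2*u+1 := by
        rw [hv2, he2, show 2*t.val+1 + 2*e = 2*(t.val+e)+1 by ring,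
          two_mul_add_one_mod _ _ (by omega)]
      have h3 : q3.val = u := by
        rw [hv3, hu]
        congr 1
        omega
      have e1 : (insFun j ib q1).val = 1 % n := by
        rw [insFun_val_lt j ib q1 (by omega)]
        exact hibe q1.val (by omega) (by omega)
      have e2 : (insFun j ib q2).val = (insFun j i q3).val := by
        rcases Nat.lt_or_ge u k with hlt | hge
        · rw [insFun_val_lt j ib q2 (by omega), insFun_val_lt j i q3 (by omega)]
          refine congrArg Fin.val ((hibo q2.val (by omega) (by omega)).trans
            (congrArg i (Fin.ext ?_)))
          exact (show q2.val/2 = q3.val by omega)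
        · rw [insFun_val_ge j ib q2 (by omega), insFun_val_ge j i q3 (by omega)]
      omega
    · -- c.val = 2*e+1
      have he2 : c.val = 2*e+1 := by omega
      set u := (t.val + e) % (k+1) with hu
      set u' := (t.val + e + 1) % (k+1) with hu'
      have hul : u < k+1 := Nat.mod_lt _ (by omega)
      have h1 : q1.val = 2*u+1 := by
        rw [hv1, he2, show 2*t.val + (2*e+1) = 2*(t.val+e)+1 by ring,
          two_mul_add_one_mod _ _ (by omega)]
      have h2 : q2.val = 2*u' := by
        rw [hv2, he2, show 2*t.val+1 + (2*e+1) = 2*(t.val+e+1) by ring, two_mul_mod]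
      have h3 : q3.val = u := by
        rw [hv3, hu]
        congr 1
        omega
      have e2 : (insFun j ib q2).val = 1 % n := by
        rw [insFun_val_lt j ib q2 (by omega)]
        exact hibe q2.val (by omega) (by omega)
      have e1 : (insFun j ib q1).val = (insFun j i q3).val := by
        rcases Nat.lt_or_ge u k with hlt | hge
        · rw [insFun_val_lt j ib q1 (by omega), insFun_val_lt j i q3 (by omega)]
          refine congrArg Fin.val ((hibo q1.val (by omega) (by omega)).trans
            (congrArg i (Fin.ext ?_)))
          exact (show q1.val/2 = q3.val by omega)
        · rw [insFun_val_ge j ib q1 (by omega), insFun_val_ge j i q3 (by omega)]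
      omega
  -- sum invariance
  have hsum : ∀ c : Fin (2*k+1+1),
      (∑ t : Fin (2*(k+1)), (rotIns n c j ib (Fin.cast pf t)).val)
      = (∑ s : Fin (2*k+1), (ib s).val) + j.val := by
    intro c
    rw [← sum_rotIns (n := n) c j ib]
    exact Fintype.sum_equiv (finCongr pf) _ _ (fun t => rfl)
  -- condition invariance
  have hcond : ∀ c : Fin (2*k+1+1),
      (∀ t : Fin (k+1),
        n ≤ (rotIns n c j ib (Fin.cast pf ⟨2*t.val, by have := t.isLt; omega⟩)).val
          + (rotIns n c j ib (Fin.cast pf ⟨2*t.val+1, by have := t.isLt; omega⟩)).val)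
      ↔ (∀ u : Fin (k+1), n ≤ 1 % n + (insFun j i u).val) := by
    intro c
    have hpt : ∀ t : Fin (k+1),
        (rotIns n c j ib (Fin.cast pf ⟨2*t.val, by have := t.isLt; omega⟩)).val
          + (rotIns n c j ib (Fin.cast pf ⟨2*t.val+1, by have := t.isLt; omega⟩)).val
        = 1 % n + (insFun j i (t + ⟨c.val/2, by have := c.isLt; omega⟩)).val :=
      fun t => pair c t ⟨c.val/2, by have := c.isLt; omega⟩ _ _ rfl
    constructor
    · intro h u
      have h4 := h (u - ⟨c.val/2, by have := c.isLt; omega⟩)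
      rw [hpt] at h4
      rwa [sub_add_cancel] at h4
    · intro h t
      rw [hpt]
      exact h _
  -- eps value independent of c
  have key : ∀ c : Fin (2*k+1+1),
      phiEven R n (k+1) ((sig R n)^l) (fun t => rotIns n c j ib (Fin.cast pf t))
      = phiEven R n (k+1) ((sig R n)^l) (fun t => rotIns n 0 j ib (Fin.cast pf t)) := by
    intro c
    simp only [phiEven]
    refine if_congr ?_ ?_ rfl
    · exact (hcond c).trans (hcond 0).symm
    · rw [hsum c, hsum 0]
  calc (∑ c : Fin (2*k+1+1), ((-1:ℤ)^((c.val+1)*(2*k+1))) •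
        (eps R n (phiEven R n (k+1) ((sig R n)^l)
          (fun t => rotIns n c j ib (Fin.cast pf t)))
          • (sig R n)^(n - j.val)))
      = ∑ c : Fin (2*k+1+1), ((-1:ℤ)^((c.val+1)*(2*k+1))) •
        (eps R n (phiEven R n (k+1) ((sig R n)^l)
          (fun t => rotIns n 0 j ib (Fin.cast pf t))) • (sig R n)^(n - j.val)) := by
        exact Finset.sum_congr rfl (fun c _ => by rw [key c])
    _ = 0 := by rw [← Finset.sum_smul, signsum, zero_smul]

lemma claim1 (hn : 0 < n) (k l : ℕ) :
    psiOdd R n hn k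
      (deltaBar R n (2*k+1)
        (fun y => phiEven R n (k+1) ((sig R n)^l) (fun t => y (Fin.cast (by ring) t))))
      = 0 := by
  rw [psiOdd]
  apply Finset.sum_eq_zero
  intro i _
  rw [deltaPhiEven_eq_zero hn k l i
      (fun t => if h : t.val % 2 = 1 then i ⟨t.val / 2, by have := t.isLt; omega⟩
        else ⟨1 % n, Nat.mod_lt _ hn⟩)
      (fun v h h0 => congrArg Fin.val (dif_neg (show ¬(v % 2 = 1) by omega)))
      (fun v h ho => dif_pos ho),
    zero_mul, smul_zero]


/-! ### Claim 2 machinery -/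

lemma mod_small (x M : ℕ) (h : x < M) : x % M = x := Nat.mod_eq_of_lt h

lemma mod_wrap (x M : ℕ) (h1 : M ≤ x) (h2 : x < 2*M) : x % M = x - M := by
  rw [Nat.mod_eq_sub_mod h1, Nat.mod_eq_of_lt (by omega)]

lemma sum_range_even_split {M : Type} [AddCommMonoid M] (f : ℕ → M) (k : ℕ) :
    ∑ c ∈ Finset.range (2*k), f c
      = (∑ d ∈ Finset.range k, f (2*d)) + ∑ d ∈ Finset.range k, f (2*d+1) := by
  induction k with
  | zero => simp
  | succ k ih =>
    rw [show 2*(k+1) = (2*k)+1+1 by ring, Finset.sum_range_succ, Finset.sum_range_succ,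
      ih, Finset.sum_range_succ (fun d => f (2*d)), Finset.sum_range_succ (fun d => f (2*d+1))]
    abel

lemma sum_range_odd_split {M : Type} [AddCommMonoid M] (f : ℕ → M) (k : ℕ) :
    ∑ c ∈ Finset.range (2*k+1), f c
      = (∑ d ∈ Finset.range (k+1), f (2*d)) + ∑ d ∈ Finset.range k, f (2*d+1) := by
  rw [Finset.sum_range_succ, sum_range_even_split, Finset.sum_range_succ (fun d => f (2*d))]
  abel

lemma collapse_one {M : Type} [AddCommMonoid M] {k n : ℕ} (d : Fin k) (z : Fin k → Fin n)
    (g : Fin n → M) :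
    (∑ i : Fin k → Fin n, if (∀ s, s ≠ d → i s = z s) then g (i d) else 0)
      = ∑ v : Fin n, g v := by
  classical
  rw [Fintype.sum_equiv (Equiv.piSplitAt d (fun _ : Fin k => Fin n))
    (fun i => if (∀ s, s ≠ d → i s = z s) then g (i d) else 0)
    (fun p => if (∀ s' : {j : Fin k // j ≠ d}, p.2 s' = z s') then g p.1 else 0)
    (fun i => if_congr ⟨fun h s' => h s' s'.2, fun h s hs => h ⟨s, hs⟩⟩ rfl rfl),
    Fintype.sum_prod_type]
  refine Finset.sum_congr rfl (fun v _ => ?_)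
  rw [Finset.sum_congr rfl
      (fun rest _ => if_congr funext_iff.symm rfl rfl),
    Finset.sum_ite_eq' Finset.univ (fun s' : {j : Fin k // j ≠ d} => z s')
      (fun _ => g v), if_pos (Finset.mem_univ _)]

/-- The special argument tuple appearing in `psiEven`. -/
def ibar {n : ℕ} (k : ℕ) (hn : 0 < n) (i : Fin k → Fin n) : Fin (2*k) → Fin n :=
  fun t => if h : t.val % 2 = 0 then i ⟨t.val / 2, by have := t.isLt; omega⟩
    else ⟨1 % n, Nat.mod_lt _ hn⟩

/-- Value-level description of `rotIns` applied to `ibar`. -/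
def gfun {n : ℕ} (hn : 0 < n) (k : ℕ) (i : Fin k → Fin n) (j : Fin n) (v : ℕ) : Fin n :=
  if h : v < 2*k then
    (if h2 : v % 2 = 0 then i ⟨v/2, by omega⟩ else ⟨1 % n, Nat.mod_lt _ hn⟩)
  else j

lemma grot {n k : ℕ} (hn : 0 < n) (c : Fin (2*k+1)) (j : Fin n) (i : Fin k → Fin n)
    (x : Fin (2*k+1)) :
    rotIns n c j (ibar k hn i) x = gfun hn k i j ((x.val + c.val) % (2*k+1)) := by
  simp only [rotIns_eq]
  rfl

lemma gfun_lt_even {n k : ℕ} (hn : 0 < n) (i : Fin k → Fin n) (j : Fin n) (v : ℕ)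
    (hv : v < 2*k) (he : v % 2 = 0) : gfun hn k i j v = i ⟨v/2, by omega⟩ := by
  rw [gfun, dif_pos hv, dif_pos he]

lemma gfun_lt_odd {n k : ℕ} (hn : 0 < n) (i : Fin k → Fin n) (j : Fin n) (v : ℕ)
    (hv : v < 2*k) (ho : ¬ v % 2 = 0) : (gfun hn k i j v).val = 1 % n := by
  rw [gfun, dif_pos hv, dif_neg ho]

lemma gfun_ge {n k : ℕ} (hn : 0 < n) (i : Fin k → Fin n) (j : Fin n) (v : ℕ)
    (hv : ¬ v < 2*k) : gfun hn k i j v = j := by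
  rw [gfun, dif_neg hv]

lemma eps_phiOdd {R : Type} [CommRing R] {n : ℕ} (k l : ℕ) (w : Fin (2*k+1) → Fin n) :
    eps R n (phiOdd R n k ((sig R n)^l) w)
    = if (∀ s : Fin k, n ≤ (w ⟨2*s.val+1, by have := s.isLt; omega⟩).val
          + (w ⟨2*s.val+2, by have := s.isLt; omega⟩).val)
      then ((-1:ℤ)^(k+1) * (w ⟨0, by omega⟩).val) •
        (if (((l + ((∑ t, (w t).val) - k*n - 1)) : ℕ) : ZMod n) = 0 then (1:R) else 0)
      else 0 := by
  rw [phiOdd]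
  by_cases h1 : (∀ s : Fin k, n ≤ (w ⟨2*s.val+1, by have := s.isLt; omega⟩).val
      + (w ⟨2*s.val+2, by have := s.isLt; omega⟩).val)
  · rw [if_pos h1, if_pos h1, eps_zsmul, sig_pow_mul_sig_pow, eps_sig_pow]
  · rw [if_neg h1, if_neg h1]
    exact eps_zero

/-- auxiliary value function for `ibar` sums -/
def ibv {n : ℕ} (k : ℕ) (i : Fin k → Fin n) (v : ℕ) : ℕ :=
  if v % 2 = 0 then (if h : v/2 < k then (i ⟨v/2, h⟩).val else 0) else 1 % n

def ivv {n : ℕ} (k : ℕ) (i : Fin k → Fin n) (v : ℕ) : ℕ :=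
  if h : v < k then (i ⟨v, h⟩).val else 0

lemma sum_ibar {n k : ℕ} (hn : 0 < n) (i : Fin k → Fin n) :
    ∑ t : Fin (2*k), ((ibar k hn i) t).val = (∑ s : Fin k, (i s).val) + k * (1 % n) := by
  have hptw : ∀ t : Fin (2*k), ((ibar k hn i) t).val = ibv k i t.val := by
    intro t
    have ht := t.isLt
    by_cases h : t.val % 2 = 0
    · rw [ibv, if_pos h, ibar, dif_pos h, dif_pos (by omega : t.val/2 < k)]
    · rw [ibv, if_neg h, ibar, dif_neg h]
  rw [Finset.sum_congr rfl (fun t _ => hptw t),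
    Fin.sum_univ_eq_sum_range (ibv k i) (2*k), sum_range_even_split]
  have h2 : ∀ d ∈ Finset.range k, ibv k i (2*d) = ivv k i d := by
    intro d hd
    simp only [Finset.mem_range] at hd
    rw [ibv, ivv, if_pos (by omega : (2*d) % 2 = 0), dif_pos (by omega : 2*d/2 < k),
      dif_pos hd]
    exact congrArg (fun s => (i s).val) (Fin.ext (show 2*d/2 = d by omega))
  have h3 : ∀ d ∈ Finset.range k, ibv k i (2*d+1) = 1 % n := by
    intro d _
    rw [ibv, if_neg (by omega : ¬ (2*d+1) % 2 = 0)]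
  rw [Finset.sum_congr rfl h2, Finset.sum_congr rfl h3, Finset.sum_const,
    Finset.card_range, smul_eq_mul, ← Fin.sum_univ_eq_sum_range (ivv k i) k]
  congr 1
  refine Finset.sum_congr rfl (fun s _ => ?_)
  rw [ivv, dif_pos s.isLt]

lemma gfun_even' {n k : ℕ} (hn : 0 < n) (i : Fin k → Fin n) (j : Fin n) (v u : ℕ)
    (hv : v < 2*k) (hu : v = 2*u) (hk : u < k) : gfun hn k i j v = i ⟨u, hk⟩ := by
  rw [gfun, dif_pos hv, dif_pos (by omega : v % 2 = 0)]
  exact congrArg i (Fin.ext (show v/2 = u by omega))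

lemma gfun_odd' {n k : ℕ} (hn : 0 < n) (i : Fin k → Fin n) (j : Fin n) (v : ℕ)
    (hv : v < 2*k) (ho : v % 2 = 1) : (gfun hn k i j v).val = 1 % n := by
  rw [gfun, dif_pos hv, dif_neg (by omega : ¬ v % 2 = 0)]

lemma cond_even {n k : ℕ} (hn : 0 < n) (hn2 : 2 ≤ n) (i : Fin k → Fin n) (j : Fin n)
    (cv d : ℕ) (hcd : cv = 2*d) (hd : d ≤ k) :
    (∀ s : Fin k, n ≤ (gfun hn k i j ((2*s.val+1 + cv) % (2*k+1))).val
        + (gfun hn k i j ((2*s.val+2 + cv) % (2*k+1))).val)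
    ↔ ((∀ s : Fin k, s.val ≠ d → (i s).val = n-1) ∧ (d < k → j.val = n-1)) := by
  subst hcd
  have h1n : 1 % n = 1 := Nat.mod_eq_of_lt hn2
  constructor
  · intro h
    refine ⟨fun s' hs' => ?_, fun hdk => ?_⟩
    · have hs'k := s'.isLt
      have hisl := (i s').isLt
      rcases Nat.lt_or_ge d s'.val with hgt | hle
      · have hcalc : n ≤ (gfun hn k i j ((2*(s'.val-d-1)+1 + 2*d) % (2*k+1))).val
            + (gfun hn k i j ((2*(s'.val-d-1)+2 + 2*d) % (2*k+1))).val :=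
          h ⟨s'.val-d-1, by omega⟩
        rw [mod_small _ _ (by omega), mod_small _ _ (by omega),
          gfun_odd' hn i j (2*(s'.val-d-1)+1+2*d) (by omega) (by omega),
          gfun_even' hn i j (2*(s'.val-d-1)+2+2*d) s'.val (by omega) (by omega) s'.isLt,
          Fin.eta] at hcalc
        omega
      · have hlt : s'.val < d := by omega
        have hcalc : n ≤ (gfun hn k i j ((2*(s'.val+k-d)+1 + 2*d) % (2*k+1))).val
            + (gfun hn k i j ((2*(s'.val+k-d)+2 + 2*d) % (2*k+1))).val :=
          h ⟨s'.val+k-d, by omega⟩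
        rw [mod_wrap _ _ (by omega) (by omega), mod_wrap _ _ (by omega) (by omega),
          gfun_even' hn i j (2*(s'.val+k-d)+1+2*d - (2*k+1)) s'.val (by omega) (by omega)
            s'.isLt,
          gfun_odd' hn i j (2*(s'.val+k-d)+2+2*d - (2*k+1)) (by omega) (by omega),
          Fin.eta] at hcalc
        omega
    · have hjl := j.isLt
      have hcalc : n ≤ (gfun hn k i j ((2*(k-1-d)+1 + 2*d) % (2*k+1))).val
          + (gfun hn k i j ((2*(k-1-d)+2 + 2*d) % (2*k+1))).val := h ⟨k-1-d, by omega⟩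
      rw [mod_small _ _ (by omega), mod_small _ _ (by omega),
        gfun_odd' hn i j (2*(k-1-d)+1+2*d) (by omega) (by omega),
        gfun_ge hn i j (2*(k-1-d)+2+2*d) (by omega)] at hcalc
      omega
  · rintro ⟨hI, hJ⟩ s
    have hsk := s.isLt
    rcases show s.val + d + 1 < k ∨ s.val + d + 1 = k ∨ k < s.val + d + 1 by omega
      with h1 | h1 | h1
    · rw [mod_small _ _ (by omega), mod_small _ _ (by omega),
        gfun_odd' hn i j (2*s.val+1+2*d) (by omega) (by omega),
        gfun_even' hn i j (2*s.val+2+2*d) (s.val+d+1) (by omega) (by omega) (by omega),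
        hI ⟨s.val+d+1, by omega⟩ (show s.val+d+1 ≠ d by omega)]
      omega
    · rw [mod_small _ _ (by omega), mod_small _ _ (by omega),
        gfun_odd' hn i j (2*s.val+1+2*d) (by omega) (by omega),
        gfun_ge hn i j (2*s.val+2+2*d) (by omega), hJ (by omega)]
      omega
    · rw [mod_wrap _ _ (by omega) (by omega), mod_wrap _ _ (by omega) (by omega),
        gfun_even' hn i j (2*s.val+1+2*d - (2*k+1)) (s.val+d-k) (by omega) (by omega)
          (by omega),
        gfun_odd' hn i j (2*s.val+2+2*d - (2*k+1)) (by omega) (by omega),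
        hI ⟨s.val+d-k, by omega⟩ (show s.val+d-k ≠ d by omega)]
      omega

lemma cond_odd {n k : ℕ} (hn : 0 < n) (hn2 : 2 ≤ n) (i : Fin k → Fin n) (j : Fin n)
    (cv d : ℕ) (hcd : cv = 2*d+1) (hd : d < k) :
    (∀ s : Fin k, n ≤ (gfun hn k i j ((2*s.val+1 + cv) % (2*k+1))).val
        + (gfun hn k i j ((2*s.val+2 + cv) % (2*k+1))).val)
    ↔ ((∀ s : Fin k, s.val ≠ 0 → (i s).val = n-1)
        ∧ n ≤ (i ⟨0, by omega⟩).val + j.val) := by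
  subst hcd
  have h1n : 1 % n = 1 := Nat.mod_eq_of_lt hn2
  constructor
  · intro h
    refine ⟨fun s' hs' => ?_, ?_⟩
    · have hs'k := s'.isLt
      have hisl := (i s').isLt
      rcases Nat.lt_or_ge d s'.val with hgt | hle
      · have hcalc : n ≤ (gfun hn k i j ((2*(s'.val-d-1)+1 + (2*d+1)) % (2*k+1))).val
            + (gfun hn k i j ((2*(s'.val-d-1)+2 + (2*d+1)) % (2*k+1))).val :=
          h ⟨s'.val-d-1, by omega⟩
        rw [mod_small _ _ (by omega), mod_small _ _ (by omega),
          gfun_even' hn i j (2*(s'.val-d-1)+1+(2*d+1)) s'.val (by omega) (by omega) s'.isLt,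
          gfun_odd' hn i j (2*(s'.val-d-1)+2+(2*d+1)) (by omega) (by omega),
          Fin.eta] at hcalc
        omega
      · have hs1 : 1 ≤ s'.val := by omega
        have hcalc : n ≤ (gfun hn k i j ((2*(s'.val+k-d-1)+1 + (2*d+1)) % (2*k+1))).val
            + (gfun hn k i j ((2*(s'.val+k-d-1)+2 + (2*d+1)) % (2*k+1))).val :=
          h ⟨s'.val+k-d-1, by omega⟩
        rw [mod_wrap _ _ (by omega) (by omega), mod_wrap _ _ (by omega) (by omega),
          gfun_odd' hn i j (2*(s'.val+k-d-1)+1+(2*d+1) - (2*k+1)) (by omega) (by omega),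
          gfun_even' hn i j (2*(s'.val+k-d-1)+2+(2*d+1) - (2*k+1)) s'.val (by omega)
            (by omega) s'.isLt,
          Fin.eta] at hcalc
        omega
    · have hcalc : n ≤ (gfun hn k i j ((2*(k-d-1)+1 + (2*d+1)) % (2*k+1))).val
          + (gfun hn k i j ((2*(k-d-1)+2 + (2*d+1)) % (2*k+1))).val := h ⟨k-d-1, by omega⟩
      rw [mod_small _ _ (by omega), mod_wrap _ _ (by omega) (by omega),
        gfun_ge hn i j (2*(k-d-1)+1+(2*d+1)) (by omega),
        gfun_even' hn i j (2*(k-d-1)+2+(2*d+1) - (2*k+1)) 0 (by omega) (by omega)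
          (by omega)] at hcalc
      exact hcalc.trans_eq (Nat.add_comm _ _)
  · rintro ⟨hI, hp⟩ s
    have hsk := s.isLt
    rcases show s.val + d + 1 < k ∨ s.val + d + 1 = k ∨ k < s.val + d + 1 by omega
      with h1 | h1 | h1
    · rw [mod_small _ _ (by omega), mod_small _ _ (by omega),
        gfun_even' hn i j (2*s.val+1+(2*d+1)) (s.val+d+1) (by omega) (by omega) (by omega),
        gfun_odd' hn i j (2*s.val+2+(2*d+1)) (by omega) (by omega),
        hI ⟨s.val+d+1, by omega⟩ (show s.val+d+1 ≠ 0 by omega)]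
      omega
    · rw [mod_small _ _ (by omega), mod_wrap _ _ (by omega) (by omega),
        gfun_ge hn i j (2*s.val+1+(2*d+1)) (by omega),
        gfun_even' hn i j (2*s.val+2+(2*d+1) - (2*k+1)) 0 (by omega) (by omega) (by omega)]
      exact hp.trans_eq (Nat.add_comm _ _)
    · rw [mod_wrap _ _ (by omega) (by omega), mod_wrap _ _ (by omega) (by omega),
        gfun_odd' hn i j (2*s.val+1+(2*d+1) - (2*k+1)) (by omega) (by omega),
        gfun_even' hn i j (2*s.val+2+(2*d+1) - (2*k+1)) (s.val+d+1-k) (by omega) (by omega)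
          (by omega),
        hI ⟨s.val+d+1-k, by omega⟩ (show s.val+d+1-k ≠ 0 by omega)]
      omega


/-- summand of the double sum computing `psiEven (deltaBar (phiOdd))`. -/
def term2 (R : Type) [CommRing R] {n k : ℕ} (hn : 0 < n) (l : ℕ) (c : Fin (2*k+1))
    (i : Fin k → Fin n) (j : Fin n) : CycA R n :=
  eps R n (phiOdd R n k ((sig R n)^l) (rotIns n c j (ibar k hn i)))
    • (sig R n)^((n - j.val) + (k*(n-1) - ∑ s, (i s).val))

def bodyE (R : Type) [CommRing R] (n k l : ℕ) (v : Fin n) : CycA R n :=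
  ((-1:ℤ)^(k+1) * v.val) •
    ((if ((l + (v.val - 1) : ℕ) : ZMod n) = 0 then (1:R) else 0) • (sig R n)^(n - v.val))

def bodyO (R : Type) [CommRing R] (n k l : ℕ) (a j : Fin n) : CycA R n :=
  if n ≤ a.val + j.val then
    ((-1:ℤ)^(k+1) * (1 % n : ℕ)) •
      ((if ((l + (a.val + j.val - n) : ℕ) : ZMod n) = 0 then (1:R) else 0)
        • (sig R n)^((n - j.val) + ((n-1) - a.val)))
  else 0

section GLemmas

variable {R : Type} [CommRing R] {n k : ℕ}

lemma hE_even (hn : 0 < n) (hn2 : 2 ≤ n) (l : ℕ) (c : Fin (2*k+1)) (d : ℕ) (hcd : c.val = 2*d) (hd : d ≤ k)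
    (i : Fin k → Fin n) (j : Fin n) :
    eps R n (phiOdd R n k ((sig R n)^l) (rotIns n c j (ibar k hn i)))
    = if ((∀ s : Fin k, s.val ≠ d → (i s).val = n-1) ∧ (d < k → j.val = n-1))
      then ((-1:ℤ)^(k+1) * (gfun hn k i j c.val).val) •
        (if ((l + (((∑ s, (i s).val) + k + j.val) - k*n - 1) : ℕ) : ZMod n) = 0
          then (1:R) else 0)
      else 0 := by
  have h1n : 1 % n = 1 := Nat.mod_eq_of_lt hn2
  have hrot : ∀ (v : ℕ) (p : v < 2*k+1),
      rotIns n c j (ibar k hn i) ⟨v, p⟩ = gfun hn k i j ((v + c.val) % (2*k+1)) :=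
    fun v p => grot hn c j i ⟨v, p⟩
  rw [eps_phiOdd]
  have hsum : (∑ t : Fin (2*k+1), ((rotIns n c j (ibar k hn i)) t).val)
      = ((∑ s : Fin k, (i s).val) + k + j.val) := by
    rw [sum_rotIns, sum_ibar hn i, h1n, Nat.mul_one]
  have hc0 : rotIns n c j (ibar k hn i) ⟨0, by omega⟩ = gfun hn k i j c.val := by
    rw [hrot 0 (by omega)]
    exact congrArg (gfun hn k i j) (by rw [Nat.zero_add, mod_small _ _ c.isLt])
  have hcnd : (∀ s : Fin k,
      n ≤ (rotIns n c j (ibar k hn i) ⟨2*s.val+1, by have := s.isLt; omega⟩).val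
        + (rotIns n c j (ibar k hn i) ⟨2*s.val+2, by have := s.isLt; omega⟩).val)
      ↔ ((∀ s : Fin k, s.val ≠ d → (i s).val = n-1) ∧ (d < k → j.val = n-1)) := by
    refine (forall_congr' (fun s => ?_)).trans (cond_even hn hn2 i j c.val d hcd hd)
    rw [hrot (2*s.val+1) (by have := s.isLt; omega),
      hrot (2*s.val+2) (by have := s.isLt; omega)]
  exact if_congr hcnd (by rw [hc0, hsum]) rfl

lemma hE_odd (hn : 0 < n) (hn2 : 2 ≤ n) (l : ℕ) (c : Fin (2*k+1)) (d : ℕ) (hcd : c.val = 2*d+1) (hd : d < k)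
    (i : Fin k → Fin n) (j : Fin n) :
    eps R n (phiOdd R n k ((sig R n)^l) (rotIns n c j (ibar k hn i)))
    = if ((∀ s : Fin k, s.val ≠ 0 → (i s).val = n-1)
          ∧ n ≤ (i ⟨0, by omega⟩).val + j.val)
      then ((-1:ℤ)^(k+1) * (gfun hn k i j c.val).val) •
        (if ((l + (((∑ s, (i s).val) + k + j.val) - k*n - 1) : ℕ) : ZMod n) = 0
          then (1:R) else 0)
      else 0 := by
  have h1n : 1 % n = 1 := Nat.mod_eq_of_lt hn2
  have hrot : ∀ (v : ℕ) (p : v < 2*k+1),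
      rotIns n c j (ibar k hn i) ⟨v, p⟩ = gfun hn k i j ((v + c.val) % (2*k+1)) :=
    fun v p => grot hn c j i ⟨v, p⟩
  rw [eps_phiOdd]
  have hsum : (∑ t : Fin (2*k+1), ((rotIns n c j (ibar k hn i)) t).val)
      = ((∑ s : Fin k, (i s).val) + k + j.val) := by
    rw [sum_rotIns, sum_ibar hn i, h1n, Nat.mul_one]
  have hc0 : rotIns n c j (ibar k hn i) ⟨0, by omega⟩ = gfun hn k i j c.val := by
    rw [hrot 0 (by omega)]
    exact congrArg (gfun hn k i j) (by rw [Nat.zero_add, mod_small _ _ c.isLt])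
  have hcnd : (∀ s : Fin k,
      n ≤ (rotIns n c j (ibar k hn i) ⟨2*s.val+1, by have := s.isLt; omega⟩).val
        + (rotIns n c j (ibar k hn i) ⟨2*s.val+2, by have := s.isLt; omega⟩).val)
      ↔ ((∀ s : Fin k, s.val ≠ 0 → (i s).val = n-1)
          ∧ n ≤ (i ⟨0, by omega⟩).val + j.val) := by
    refine (forall_congr' (fun s => ?_)).trans (cond_odd hn hn2 i j c.val d hcd hd)
    rw [hrot (2*s.val+1) (by have := s.isLt; omega),
      hrot (2*s.val+2) (by have := s.isLt; omega)]
  exact if_congr hcnd (by rw [hc0, hsum]) rfl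

lemma sum_forced (hn : 0 < n) (d : Fin k) (i : Fin k → Fin n)
    (hA : ∀ s, s ≠ d → i s = (⟨n-1, by omega⟩ : Fin n)) :
    (∑ s, (i s).val) = (k-1)*(n-1) + (i d).val := by
  rw [← Finset.sum_erase_add _ _ (Finset.mem_univ d),
    Finset.sum_congr rfl (fun s hs => by
      rw [hA s (Finset.mem_erase.1 hs).1] : ∀ s ∈ Finset.univ.erase d, (i s).val = n-1),
    Finset.sum_const, Finset.card_erase_of_mem (Finset.mem_univ d), Finset.card_univ,
    Fintype.card_fin, smul_eq_mul]

lemma Geven (hn : 0 < n) (hn2 : 2 ≤ n) (l : ℕ) (c : Fin (2*k+1)) (d : ℕ) (hcd : c.val = 2*d) :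
    (∑ i : Fin k → Fin n, ∑ j : Fin n, term2 R hn l c i j)
      = ∑ v : Fin n, bodyE R n k l v := by
  have hd : d ≤ k := by have := c.isLt; omega
  have h3 : k*(n-1) + k = k*n := by
    obtain ⟨n', rfl⟩ : ∃ n', n = n'+1 := ⟨n-1, by omega⟩
    rw [Nat.succ_sub_one]
    ring
  rcases Nat.lt_or_ge d k with hdk | hdk
  · -- d < k
    have h2 : (k-1)*(n-1) + (n-1) = k*(n-1) := by
      obtain ⟨k', rfl⟩ : ∃ k', k = k'+1 := ⟨k-1, by omega⟩
      rw [Nat.succ_sub_one]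
      ring
    have hpt : ∀ (i : Fin k → Fin n) (j : Fin n), term2 R hn l c i j
        = if (∀ s : Fin k, s ≠ ⟨d, hdk⟩ → i s = (⟨n-1, by omega⟩ : Fin n))
          then (if j = (⟨n-1, by omega⟩ : Fin n) then bodyE R n k l (i ⟨d, hdk⟩) else 0)
          else 0 := by
      intro i j
      rw [term2, hE_even hn hn2 l c d hcd hd i j]
      by_cases hA : (∀ s : Fin k, s ≠ ⟨d, hdk⟩ → i s = (⟨n-1, by omega⟩ : Fin n))
      · by_cases hB : j = (⟨n-1, by omega⟩ : Fin n)
        · have hvB : j.val = n-1 := by rw [hB]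
          have hC : ((∀ s : Fin k, s.val ≠ d → (i s).val = n-1) ∧ (d < k → j.val = n-1)) :=
            ⟨fun s hs => by rw [hA s (fun he => hs (by rw [he]))], fun _ => hvB⟩
          rw [if_pos hC, if_pos hA, if_pos hB, smul_assoc, bodyE]
          have hSi : (∑ s, (i s).val) = (k-1)*(n-1) + (i ⟨d, hdk⟩).val := sum_forced hn _ i hA
          have hvd := (i ⟨d, hdk⟩).isLt
          have hw0 : gfun hn k i j c.val = i ⟨d, hdk⟩ :=
            gfun_even' hn i j c.val d (by omega) hcd hdk
          have hχ : (l + (((∑ s : Fin k, (i s).val) + k + j.val) - k*n - 1))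
              = l + ((i ⟨d, hdk⟩).val - 1) := by rw [hSi, hvB]; omega
          have hexp : ((n - j.val) + (k*(n-1) - (∑ s : Fin k, (i s).val)))
              = n - (i ⟨d, hdk⟩).val := by rw [hSi, hvB]; omega
          rw [hw0, hχ, hexp]
        · have hC : ¬((∀ s : Fin k, s.val ≠ d → (i s).val = n-1)
              ∧ (d < k → j.val = n-1)) := fun hc => hB (Fin.ext (hc.2 hdk))
          rw [if_neg hC, if_pos hA, if_neg hB, zero_smul]
      · have hC : ¬((∀ s : Fin k, s.val ≠ d → (i s).val = n-1)
            ∧ (d < k → j.val = n-1)) := fun hc =>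
          hA (fun s hs => Fin.ext (hc.1 s (fun hv => hs (Fin.ext hv))))
        rw [if_neg hC, if_neg hA, zero_smul]
    rw [Finset.sum_congr rfl (fun i _ => Finset.sum_congr rfl (fun j _ => hpt i j))]
    have hstep : ∀ i : Fin k → Fin n,
        (∑ j : Fin n, if (∀ s : Fin k, s ≠ ⟨d, hdk⟩ → i s = (⟨n-1, by omega⟩ : Fin n))
          then (if j = (⟨n-1, by omega⟩ : Fin n) then bodyE R n k l (i ⟨d, hdk⟩) else 0)
          else 0)
        = if (∀ s : Fin k, s ≠ ⟨d, hdk⟩ → i s = (⟨n-1, by omega⟩ : Fin n))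
          then bodyE R n k l (i ⟨d, hdk⟩) else 0 := by
      intro i
      by_cases hA : (∀ s : Fin k, s ≠ ⟨d, hdk⟩ → i s = (⟨n-1, by omega⟩ : Fin n))
      · simp only [if_pos hA]
        rw [Finset.sum_ite_eq' Finset.univ (⟨n-1, by omega⟩ : Fin n)
          (fun _ => bodyE R n k l (i ⟨d, hdk⟩)), if_pos (Finset.mem_univ _)]
      · simp only [if_neg hA, Finset.sum_const_zero]
    rw [Finset.sum_congr rfl (fun i _ => hstep i),
      collapse_one (⟨d, hdk⟩ : Fin k) (fun _ => (⟨n-1, by omega⟩ : Fin n))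
        (bodyE R n k l)]
  · -- d = k
    have hdk' : d = k := by omega
    have hpt : ∀ (i : Fin k → Fin n) (j : Fin n), term2 R hn l c i j
        = if (∀ s : Fin k, i s = (⟨n-1, by omega⟩ : Fin n)) then bodyE R n k l j
          else 0 := by
      intro i j
      rw [term2, hE_even hn hn2 l c d hcd hd i j]
      by_cases hA : (∀ s : Fin k, i s = (⟨n-1, by omega⟩ : Fin n))
      · have hC : ((∀ s : Fin k, s.val ≠ d → (i s).val = n-1) ∧ (d < k → j.val = n-1)) :=
          ⟨fun s _ => by rw [hA s], fun h => absurd h (by omega)⟩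
        rw [if_pos hC, if_pos hA, smul_assoc, bodyE]
        have hSi : (∑ s, (i s).val) = k*(n-1) := by
          rw [Finset.sum_congr rfl (fun s _ => by rw [hA s] : ∀ s ∈ Finset.univ,
            (i s).val = n-1), Finset.sum_const, Finset.card_univ, Fintype.card_fin,
            smul_eq_mul]
        have hjd := j.isLt
        have hw0 : gfun hn k i j c.val = j :=
          gfun_ge hn i j c.val (by omega)
        have hχ : (l + (((∑ s : Fin k, (i s).val) + k + j.val) - k*n - 1))
            = l + (j.val - 1) := by rw [hSi]; omega
        have hexp : ((n - j.val) + (k*(n-1) - (∑ s : Fin k, (i s).val)))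
            = n - j.val := by rw [hSi]; omega
        rw [hw0, hχ, hexp]
      · have hC : ¬((∀ s : Fin k, s.val ≠ d → (i s).val = n-1)
            ∧ (d < k → j.val = n-1)) := fun hc =>
          hA (fun s => Fin.ext (hc.1 s (by omega)))
        rw [if_neg hC, if_neg hA, zero_smul]
    rw [Finset.sum_congr rfl (fun i _ => Finset.sum_congr rfl (fun j _ => hpt i j)),
      Finset.sum_comm]
    refine Finset.sum_congr rfl (fun j _ => ?_)
    rw [Finset.sum_congr rfl (fun i _ =>
        if_congr (funext_iff (f := i) (g := fun _ => (⟨n-1, by omega⟩ : Fin n))).symm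
          rfl rfl),
      Finset.sum_ite_eq' Finset.univ (fun _ => (⟨n-1, by omega⟩ : Fin n))
        (fun _ => bodyE R n k l j), if_pos (Finset.mem_univ _)]

lemma Godd (hn : 0 < n) (hn2 : 2 ≤ n) (l : ℕ) (c : Fin (2*k+1)) (d : ℕ) (hcd : c.val = 2*d+1) :
    (∑ i : Fin k → Fin n, ∑ j : Fin n, term2 R hn l c i j)
      = ∑ j : Fin n, ∑ a : Fin n, bodyO R n k l a j := by
  have hd : d < k := by have := c.isLt; omega
  have hk1 : 0 < k := by omega
  have h1n : 1 % n = 1 := Nat.mod_eq_of_lt hn2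
  have h2 : (k-1)*(n-1) + (n-1) = k*(n-1) := by
    obtain ⟨k', rfl⟩ : ∃ k', k = k'+1 := ⟨k-1, by omega⟩
    rw [Nat.succ_sub_one]
    ring
  have h3 : k*(n-1) + k = k*n := by
    obtain ⟨n', rfl⟩ : ∃ n', n = n'+1 := ⟨n-1, by omega⟩
    rw [Nat.succ_sub_one]
    ring
  have hpt : ∀ (i : Fin k → Fin n) (j : Fin n), term2 R hn l c i j
      = if (∀ s : Fin k, s ≠ ⟨0, hk1⟩ → i s = (⟨n-1, by omega⟩ : Fin n))
        then bodyO R n k l (i ⟨0, hk1⟩) j else 0 := by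
    intro i j
    rw [term2, hE_odd hn hn2 l c d hcd hd i j]
    by_cases hA : (∀ s : Fin k, s ≠ ⟨0, hk1⟩ → i s = (⟨n-1, by omega⟩ : Fin n))
    · by_cases hB : n ≤ (i ⟨0, hk1⟩).val + j.val
      · have hC : ((∀ s : Fin k, s.val ≠ 0 → (i s).val = n-1)
            ∧ n ≤ (i ⟨0, by omega⟩).val + j.val) :=
          ⟨fun s hs => by rw [hA s (fun he => hs (by rw [he]))], hB⟩
        rw [if_pos hC, if_pos hA, smul_assoc, bodyO, if_pos hB]
        have hSi : (∑ s, (i s).val) = (k-1)*(n-1) + (i ⟨0, hk1⟩).val := sum_forced hn _ i hA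
        have hvd := (i ⟨0, hk1⟩).isLt
        have hjd := j.isLt
        have hw0 : (gfun hn k i j c.val).val = 1 % n :=
          gfun_odd' hn i j c.val (by omega) (by omega)
        have hχ : (l + (((∑ s : Fin k, (i s).val) + k + j.val) - k*n - 1))
            = l + ((i ⟨0, hk1⟩).val + j.val - n) := by rw [hSi]; omega
        have hexp : ((n - j.val) + (k*(n-1) - (∑ s : Fin k, (i s).val)))
            = (n - j.val) + ((n-1) - (i ⟨0, hk1⟩).val) := by rw [hSi]; omega
        rw [hw0, hχ, hexp]
      · have hC : ¬((∀ s : Fin k, s.val ≠ 0 → (i s).val = n-1)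
            ∧ n ≤ (i ⟨0, by omega⟩).val + j.val) := fun hc => hB hc.2
        rw [if_neg hC, if_pos hA, zero_smul, bodyO, if_neg hB]
    · have hC : ¬((∀ s : Fin k, s.val ≠ 0 → (i s).val = n-1)
          ∧ n ≤ (i ⟨0, by omega⟩).val + j.val) := fun hc =>
        hA (fun s hs => Fin.ext (hc.1 s (fun hv => hs (Fin.ext hv))))
      rw [if_neg hC, if_neg hA, zero_smul]
  rw [Finset.sum_congr rfl (fun i _ => Finset.sum_congr rfl (fun j _ => hpt i j)),
    Finset.sum_comm]
  refine Finset.sum_congr rfl (fun j _ => ?_)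
  exact collapse_one (⟨0, hk1⟩ : Fin k) (fun _ => (⟨n-1, by omega⟩ : Fin n))
    (fun a => bodyO R n k l a j)

end GLemmas


section Eval

variable {R : Type} [CommRing R] {n : ℕ}

lemma evalE [NeZero n] (k l : ℕ) :
    (∑ v : Fin n, bodyE R n k l v)
      = ((-1:ℤ)^(k+1)) • ((((1 - (l:ZMod n)).val : ℕ) : R) •
          (sig R n)^(n - (1 - (l:ZMod n)).val)) := by
  have hwlt : (1 - (l:ZMod n)).val < n := ZMod.val_lt _
  have hwz : (((1 - (l:ZMod n)).val : ℕ) : ZMod n) = 1 - (l : ZMod n) :=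
    ZMod.natCast_rightInverse _
  have hz : ∀ v : Fin n, v ≠ ⟨(1 - (l:ZMod n)).val, hwlt⟩ → bodyE R n k l v = 0 := by
    intro v hvne
    rw [bodyE]
    rcases Nat.eq_zero_or_pos v.val with hv0 | hv0
    · rw [hv0, Nat.cast_zero, mul_zero, zero_smul]
    · have hχ : ¬ ((l + (v.val - 1) : ℕ) : ZMod n) = 0 := by
        intro hc
        rw [Nat.cast_add, Nat.cast_sub hv0, Nat.cast_one] at hc
        have hv : ((v.val : ℕ) : ZMod n) = 1 - l := by linear_combination hc
        have hveq : v.val = (1 - (l:ZMod n)).val := by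
          rw [← hv, ZMod.val_cast_of_lt v.isLt]
        exact hvne (Fin.ext hveq)
      rw [if_neg hχ, zero_smul, smul_zero]
  rw [Finset.sum_eq_single_of_mem (⟨(1 - (l:ZMod n)).val, hwlt⟩ : Fin n)
    (Finset.mem_univ _) (fun v _ h => hz v h), bodyE,
    show ((⟨(1 - (l:ZMod n)).val, hwlt⟩ : Fin n) : ℕ) = (1 - (l:ZMod n)).val from rfl]
  rcases Nat.eq_zero_or_pos (1 - (l:ZMod n)).val with hw0 | hw0
  · rw [hw0]
    simp
  · have hχ : ((l + ((1 - (l:ZMod n)).val - 1) : ℕ) : ZMod n) = 0 := by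
      rw [Nat.cast_add, Nat.cast_sub hw0, hwz, Nat.cast_one]
      ring
    rw [if_pos hχ, one_smul, mul_smul,
      ← Int.cast_smul_eq_zsmul R ((((1 - (l:ZMod n)).val : ℕ) : ℤ)), Int.cast_natCast]

lemma evalO [NeZero n] (hn2 : 2 ≤ n) (k l : ℕ) :
    (∑ j : Fin n, ∑ a : Fin n, bodyO R n k l a j)
      = ((-1:ℤ)^(k+1)) • (((n - 1 - (-(l:ZMod n)).val : ℕ) : R) •
          (sig R n)^(n - 1 - (-(l:ZMod n)).val)) := by
  have hrlt : (-(l:ZMod n)).val < n := ZMod.val_lt _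
  have hrz : (((-(l:ZMod n)).val : ℕ) : ZMod n) = -(l:ZMod n) := ZMod.natCast_rightInverse _
  have h1n : (1:ℕ) % n = 1 := Nat.mod_eq_of_lt hn2
  have hpt : ∀ a j : Fin n, bodyO R n k l a j
      = if a.val + j.val = n + (-(l:ZMod n)).val then
          ((-1:ℤ)^(k+1)) • ((1:R) • (sig R n)^(n - 1 - (-(l:ZMod n)).val)) else 0 := by
    intro a j
    have hal := a.isLt
    have hjl := j.isLt
    rw [bodyO]
    by_cases h : a.val + j.val = n + (-(l:ZMod n)).val
    · have hχ : ((l + (a.val + j.val - n) : ℕ) : ZMod n) = 0 := by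
        rw [show l + (a.val + j.val - n) = l + (-(l:ZMod n)).val by omega,
          Nat.cast_add, hrz]
        ring
      rw [if_pos (show n ≤ a.val + j.val by omega), if_pos h, if_pos hχ, h1n,
        Nat.cast_one, mul_one,
        show (n - j.val) + ((n-1) - a.val) = n - 1 - (-(l:ZMod n)).val by omega]
    · rcases Nat.lt_or_ge (a.val + j.val) n with hlt | hge
      · rw [if_neg (by omega), if_neg h]
      · have hχ : ¬ ((l + (a.val + j.val - n) : ℕ) : ZMod n) = 0 := by
          intro hc
          rw [Nat.cast_add] at hc
          have hs : (((a.val + j.val - n : ℕ) : ℕ) : ZMod n) = -(l:ZMod n) :=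
            eq_neg_of_add_eq_zero_right hc
          have hsn : a.val + j.val - n < n := by omega
          have : a.val + j.val - n = (-(l:ZMod n)).val := by
            rw [← hs, ZMod.val_cast_of_lt hsn]
          omega
        rw [if_pos hge, if_neg hχ, zero_smul, smul_zero, if_neg h]
  rw [Finset.sum_congr rfl (fun j _ => Finset.sum_congr rfl (fun a _ => hpt a j))]
  have hstep : ∀ j : Fin n,
      (∑ a : Fin n, if a.val + j.val = n + (-(l:ZMod n)).val then
          ((-1:ℤ)^(k+1)) • ((1:R) • (sig R n)^(n - 1 - (-(l:ZMod n)).val)) else 0)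
      = if (-(l:ZMod n)).val < j.val then
          ((-1:ℤ)^(k+1)) • ((1:R) • (sig R n)^(n - 1 - (-(l:ZMod n)).val)) else 0 := by
    intro j
    have hjl := j.isLt
    by_cases hj : (-(l:ZMod n)).val < j.val
    · rw [Finset.sum_eq_single_of_mem (⟨n + (-(l:ZMod n)).val - j.val, by omega⟩ : Fin n)
        (Finset.mem_univ _) (fun b _ hbne => if_neg (fun hc => hbne (Fin.ext
          (show b.val = n + (-(l:ZMod n)).val - j.val by omega)))),
        if_pos (show n + (-(l:ZMod n)).val - j.val + j.val = n + (-(l:ZMod n)).val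
          by omega), if_pos hj]
    · rw [if_neg hj]
      refine Finset.sum_eq_zero (fun a _ => ?_)
      have := a.isLt
      exact if_neg (by omega)
  rw [Finset.sum_congr rfl (fun j _ => hstep j)]
  rw [Fin.sum_univ_eq_sum_range (fun v => if (-(l:ZMod n)).val < v then
      ((-1:ℤ)^(k+1)) • ((1:R) • (sig R n)^(n - 1 - (-(l:ZMod n)).val)) else 0) n,
    Finset.sum_ite, Finset.sum_const, Finset.sum_const_zero, add_zero,
    show Finset.filter (fun v => (-(l:ZMod n)).val < v) (Finset.range n)
        = Finset.Ico ((-(l:ZMod n)).val + 1) n from Finset.ext (fun x => by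
          simp only [Finset.mem_filter, Finset.mem_range, Finset.mem_Ico]
          omega),
    Nat.card_Ico,
    show n - ((-(l:ZMod n)).val + 1) = n - 1 - (-(l:ZMod n)).val from by omega]
  rw [smul_comm, one_smul, ← Nat.cast_smul_eq_nsmul R]

end Eval


lemma claim2 {R : Type} [CommRing R] {n p : ℕ} [CharP R p] (hpn : p ∣ n) (hn : 0 < n)
    (k l : ℕ) :
    psiEven R n hn k (deltaBar R n (2*k) (phiOdd R n k ((sig R n)^l)))
      = ((l:ℤ) - 1) • ((sig R n)^l * (sig R n)^(n-1)) := by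
  rcases Nat.lt_or_ge n 2 with hn1 | hn2
  · -- n = 1 : R is trivial
    have h1 : n = 1 := by omega
    have hp1 : p = 1 := Nat.dvd_one.mp (h1 ▸ hpn)
    have h10 : (1 : R) = 0 := by
      have := CharP.cast_eq_zero R p
      rw [hp1, Nat.cast_one] at this
      exact this
    haveI : Subsingleton R := subsingleton_of_zero_eq_one h10.symm
    haveI : Unique (CycA R n) := inferInstance
    exact Subsingleton.elim _ _
  · haveI : NeZero n := ⟨by omega⟩
    have φ : ZMod n →+* R := ZMod.castHom hpn R
    have hcast : ∀ a b : ℕ, ((a : ℕ) : ZMod n) = ((b : ℕ) : ZMod n) → ((a:ℕ):R) = ((b:ℕ):R) := by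
      intro a b h
      have := congrArg (ZMod.castHom hpn R) h
      rwa [map_natCast, map_natCast] at this
    rw [psiEven]
    have hstep1 : ∀ i : Fin k → Fin n,
        (deltaBar R n (2*k) (phiOdd R n k ((sig R n)^l)) (ibar k hn i))
          * (sig R n)^(k*(n-1) - ∑ s, (i s).val)
        = ∑ j : Fin n, ∑ c : Fin (2*k+1), term2 R hn l c i j := by
      intro i
      simp only [deltaBar]
      rw [Finset.sum_mul]
      refine Finset.sum_congr rfl (fun j _ => ?_)
      rw [Finset.sum_mul]
      refine Finset.sum_congr rfl (fun c _ => ?_)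
      rw [show ((-1:ℤ)^((c.val+1)*(2*k))) = 1 from Even.neg_one_pow ⟨(c.val+1)*k, by ring⟩,
        one_smul, smul_mul_assoc, sig_pow_mul_sig_pow, term2]
    rw [show (∑ i : Fin k → Fin n, ((-1:ℤ)^k) •
        ((deltaBar R n (2*k) (phiOdd R n k ((sig R n)^l))
          (fun t : Fin (2*k) => if h : t.val % 2 = 0
            then i ⟨t.val / 2, by have := t.isLt; omega⟩
            else ⟨1 % n, Nat.mod_lt _ hn⟩))
          * (sig R n)^(k*(n-1) - ∑ s, (i s).val)))
      = ∑ i : Fin k → Fin n, ((-1:ℤ)^k) •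
        ((deltaBar R n (2*k) (phiOdd R n k ((sig R n)^l)) (ibar k hn i))
          * (sig R n)^(k*(n-1) - ∑ s, (i s).val)) from rfl]
    rw [Finset.sum_congr rfl (fun i _ => by rw [hstep1 i]), ← Finset.smul_sum]
    rw [Finset.sum_congr rfl (fun i _ => Finset.sum_comm), Finset.sum_comm]
    -- now : (-1)^k • ∑ c ∑ i ∑ j term2
    have hGc : ∀ c : Fin (2*k+1),
        (∑ i : Fin k → Fin n, ∑ j : Fin n, term2 R hn l c i j)
        = if c.val % 2 = 0 then (∑ v : Fin n, bodyE R n k l v)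
          else (∑ j : Fin n, ∑ a : Fin n, bodyO R n k l a j) := by
      intro c
      rcases Nat.even_or_odd c.val with ⟨e, he⟩ | ⟨e, he⟩
      · rw [if_pos (by omega)]
        exact Geven hn hn2 l c e (by omega)
      · rw [if_neg (by omega)]
        exact Godd hn hn2 l c e (by omega)
    rw [Finset.sum_congr rfl (fun c _ => hGc c),
      Fin.sum_univ_eq_sum_range (fun v => if v % 2 = 0 then (∑ v : Fin n, bodyE R n k l v)
        else (∑ j : Fin n, ∑ a : Fin n, bodyO R n k l a j)) (2*k+1),
      sum_range_odd_split,
      Finset.sum_congr rfl (fun d _ => if_pos (show (2*d) % 2 = 0 by omega)),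
      Finset.sum_congr rfl (fun d _ => if_neg (show ¬ (2*d+1) % 2 = 0 by omega)),
      Finset.sum_const, Finset.sum_const, Finset.card_range, Finset.card_range,
      evalE k l, evalO hn2 k l]
    -- final algebra
    have hwlt : (1 - (l:ZMod n)).val < n := ZMod.val_lt _
    have hrlt : (-(l:ZMod n)).val < n := ZMod.val_lt _
    have hwz : (((1 - (l:ZMod n)).val : ℕ) : ZMod n) = 1 - (l : ZMod n) :=
      ZMod.natCast_rightInverse _
    have hrz : (((-(l:ZMod n)).val : ℕ) : ZMod n) = -(l:ZMod n) :=
      ZMod.natCast_rightInverse _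
    have hZ1 : (sig R n)^(n - (1 - (l:ZMod n)).val) = (sig R n)^l * (sig R n)^(n-1) := by
      rw [sig_pow_mul_sig_pow, sig_pow, sig_pow]
      congr 1
      rw [Nat.cast_sub (le_of_lt hwlt), Nat.cast_add, Nat.cast_sub (by omega : 1 ≤ n),
        ZMod.natCast_self, hwz]
      ring
    have hZ2 : (sig R n)^(n - 1 - (-(l:ZMod n)).val) = (sig R n)^l * (sig R n)^(n-1) := by
      rw [sig_pow_mul_sig_pow, sig_pow, sig_pow]
      congr 1
      rw [show n - 1 - (-(l:ZMod n)).val = n - (1 + (-(l:ZMod n)).val) from by omega,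
        Nat.cast_sub (by omega : 1 + (-(l:ZMod n)).val ≤ n), Nat.cast_add,
        Nat.cast_add, Nat.cast_sub (by omega : 1 ≤ n), ZMod.natCast_self, Nat.cast_one,
        hrz]
      ring
    have hwR : (((1 - (l:ZMod n)).val : ℕ) : R) = 1 - (l : R) := by
      have h := congrArg (ZMod.castHom hpn R) hwz
      rwa [map_natCast, map_sub, map_one, map_natCast] at h
    have hcntR : ((n - 1 - (-(l:ZMod n)).val : ℕ) : R) = (l : R) - 1 := by
      have hzm : ((n - 1 - (-(l:ZMod n)).val : ℕ) : ZMod n) = (l : ZMod n) - 1 := by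
        rw [show n - 1 - (-(l:ZMod n)).val = n - (1 + (-(l:ZMod n)).val) from by omega,
          Nat.cast_sub (by omega : 1 + (-(l:ZMod n)).val ≤ n), Nat.cast_add,
          ZMod.natCast_self, Nat.cast_one, hrz]
        ring
      have h := congrArg (ZMod.castHom hpn R) hzm
      rwa [map_natCast, map_sub, map_one, map_natCast] at h
    rw [hZ1, hZ2, hwR, hcntR]
    have hX1 : ((1:R) - (l:R)) • ((sig R n)^l * (sig R n)^(n-1))
        = -(((l:R) - 1) • ((sig R n)^l * (sig R n)^(n-1))) := by
      rw [← neg_smul]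
      congr 1
      ring
    rw [hX1, ← Int.cast_smul_eq_zsmul R ((l:ℤ)-1),
      show (((l:ℤ) - 1 : ℤ) : R) = (l:R) - 1 from by push_cast; ring]
    generalize ((l:R) - 1) • ((sig R n)^l * (sig R n)^(n-1)) = Y
    have hsgn : ((-1:ℤ)^k) * ((-1:ℤ)^(k+1)) = -1 := by
      rw [← pow_add]
      exact Odd.neg_one_pow ⟨k, by ring⟩
    rw [smul_neg, smul_neg, show (k+1) • ((-1:ℤ)^(k+1) • Y) = k • ((-1:ℤ)^(k+1) • Y)
        + (-1:ℤ)^(k+1) • Y from succ_nsmul _ k,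
      show -(k • ((-1:ℤ)^(k+1) • Y) + (-1:ℤ)^(k+1) • Y) + k • ((-1:ℤ)^(k+1) • Y)
        = -((-1:ℤ)^(k+1) • Y) from by abel,
      smul_neg, smul_smul, hsgn, neg_one_zsmul, neg_neg]


end BVAux

/-
STATEMENT 10: Let R be a commutative ring of characteristic p > 0 and n = mp.  On
HH^*(R[ℤ/nℤ]) ≅ R[x,y,z]/(xⁿ−1, y²) (resp. R[x,y,z]/(xⁿ−1, y²−x^{n−2}z) when
p = 2 and m odd), the BV-operator Δ induced by the canonical symmetric form of the
group ring satisfies Δ(z^k x^l) = 0 and Δ(z^k y x^l) = (l−1) z^k x^{l−1}.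

In the 2-periodic model (note nσ^{n−1} = 0 in characteristic p with p | n, so
HH^i(A;A) = A for all i) the class z^k x^l is represented by the cochain
φ̄*_{2k}(σ^l), the class z^k y x^l by φ̄*_{2k+1}(σ^l), and the resulting classes are
read off by ψ̄*; x^{l−1} means σ^{l−1} = σ^l·σ^{n−1}.
-/
theorem BV_operator_cyclic_group_ring_char_p
    (p m : ℕ) (hp : 0 < p) (hm : 0 < m) [CharP R p] (hn : n = m * p) :
    -- Δ(z^k x^l) = 0
    (∀ k l : ℕ,
      psiOdd R n (hn ▸ Nat.mul_pos hm hp) k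
        (deltaBar R n (2 * k + 1)
          (fun y => phiEven R n (k + 1) ((sig R n) ^ l) (fun t => y (Fin.cast (by ring) t))))
        = 0) ∧
    -- Δ(z^k y x^l) = (l − 1) z^k x^{l−1}
    (∀ k l : ℕ,
      psiEven R n (hn ▸ Nat.mul_pos hm hp) k
        (deltaBar R n (2 * k) (phiOdd R n k ((sig R n) ^ l)))
        = ((l : ℤ) - 1) • ((sig R n) ^ l * (sig R n) ^ (n - 1))) := by
  refine ⟨fun k l => BVAux.claim1 (hn ▸ Nat.mul_pos hm hp) k l,
    fun k l => BVAux.claim2 (show p ∣ n from ⟨m, by rw [hn]; ring⟩)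
      (hn ▸ Nat.mul_pos hm hp) k l⟩

end
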